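/- Let V be a real inner product space of dimension at least 2, and let f : V → ℝ be absolutely homogeneous of degree 1 and not identically zero. Then there exist u, v ∈ V, both nonzero, such that f(u + v) ≠ ((1 + ρ)/2)·(f(u) + f(v)) + ((1 − ρ)/2)·|f(u) − f(v)|, where ρ = ⟨u,v⟩/(‖u‖·‖v‖). -/

import Mathlib

open scoped RealInnerProductSpace

theorem stmt2 {V : Type*} [NormedAddCommGroup V] [InnerProductSpace ℝ V]
    (hdim : 2 ≤ Module.rank ℝ V) (f : V → ℝ)
    (hhom : ∀ (l : ℝ) (v : V), f (l • v) = |l| * f v)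
    (hne : f ≠ 0) :
    ∃ u v : V, u ≠ 0 ∧ v ≠ 0 ∧
      f (u + v) ≠ (1 + ⟪u, v⟫ / (‖u‖ * ‖v‖)) / 2 * (f u + f v)
        + (1 - ⟪u, v⟫ / (‖u‖ * ‖v‖)) / 2 * |f u - f v| := by
  by_contra hcon
  push_neg at hcon
  have hf0 : f 0 = 0 := by simpa using hhom 0 0
  have hfneg : ∀ x : V, f (-x) = f x := by
    intro x; have := hhom (-1) x; simpa using this
  -- f is nonnegative everywhere
  have hnn : ∀ x : V, 0 ≤ f x := by
    intro x
    by_contra hx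
    push_neg at hx
    have hx0 : x ≠ 0 := by
      intro h; rw [h, hf0] at hx; linarith
    have hxn : (0:ℝ) < ‖x‖ := norm_pos_iff.mpr hx0
    have hv0 : (-(2:ℝ)⁻¹) • x ≠ 0 := smul_ne_zero (by norm_num) hx0
    have heq := hcon x ((-(2:ℝ)⁻¹) • x) hx0 hv0
    have h1 : ⟪x, (-(2:ℝ)⁻¹) • x⟫ = -(2:ℝ)⁻¹ * (‖x‖ * ‖x‖) := by
      rw [real_inner_smul_right, real_inner_self_eq_norm_mul_norm]
    have h2 : ‖(-(2:ℝ)⁻¹) • x‖ = (2:ℝ)⁻¹ * ‖x‖ := by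
      rw [norm_smul]; norm_num
    have h3 : x + (-(2:ℝ)⁻¹) • x = ((2:ℝ)⁻¹) • x := by module
    rw [h1, h2, h3, hhom, hhom] at heq
    have hrho : -(2:ℝ)⁻¹ * (‖x‖ * ‖x‖) / (‖x‖ * ((2:ℝ)⁻¹ * ‖x‖)) = -1 := by
      field_simp
    rw [hrho] at heq
    have habs1 : |(-(2:ℝ)⁻¹)| = (2:ℝ)⁻¹ := by norm_num
    have habs2 : |((2:ℝ)⁻¹)| = (2:ℝ)⁻¹ := by norm_num
    rw [habs1, habs2] at heq
    have habs3 : |f x - (2:ℝ)⁻¹ * f x| = -((2:ℝ)⁻¹ * f x) := by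
      rw [abs_of_neg (by linarith)]; ring
    rw [habs3] at heq
    nlinarith [heq]
  -- orthogonal pairs satisfy the max rule
  have hmax : ∀ u v : V, u ≠ 0 → v ≠ 0 → ⟪u, v⟫ = 0 →
      f (u + v) = max (f u) (f v) := by
    intro u v hu hv hperp
    have heq := hcon u v hu hv
    rw [hperp, zero_div] at heq
    rcases le_total (f u) (f v) with h | h
    · rw [abs_of_nonpos (by linarith)] at heq
      rw [max_eq_right h]; linarith
    · rw [abs_of_nonneg (by linarith)] at heq
      rw [max_eq_left h]; linarith
  -- witness with f w > 0
  obtain ⟨w, hw⟩ := Function.ne_iff.mp hne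
  have hw0 : w ≠ 0 := by
    intro h; exact hw (by rw [h, hf0]; rfl)
  have hwpos : 0 < f w := lt_of_le_of_ne (hnn w) (fun h => hw (by simpa using h.symm))
  have hwn : (0:ℝ) < ‖w‖ := norm_pos_iff.mpr hw0
  -- orthogonal vector
  obtain ⟨v, hv0, hperp⟩ : ∃ v : V, v ≠ 0 ∧ ⟪w, v⟫ = 0 := by
    have hK : ((ℝ ∙ w)ᗮ : Submodule ℝ V) ≠ ⊥ := by
      intro hbot
      have hsup : (ℝ ∙ w) ⊔ (ℝ ∙ w)ᗮ = ⊤ := Submodule.sup_orthogonal_of_hasOrthogonalProjection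
      rw [hbot, sup_bot_eq] at hsup
      have h1 : Module.rank ℝ (ℝ ∙ w) ≤ 1 := by
        simpa using rank_span_le (R := ℝ) (M := V) ({w} : Set V)
      rw [hsup, rank_top] at h1
      exact absurd (le_trans hdim h1) (by norm_num)
    obtain ⟨v, hvmem, hv0⟩ := Submodule.ne_bot_iff _ |>.mp hK
    exact ⟨v, hv0, (Submodule.mem_orthogonal _ _).mp hvmem w (Submodule.mem_span_singleton_self w)⟩
  have hvn : (0:ℝ) < ‖v‖ := norm_pos_iff.mpr hv0
  -- normalize: b orthogonal to w with same norm
  set b : V := (‖w‖ / ‖v‖) • v with hb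
  have hb0 : b ≠ 0 := smul_ne_zero (by positivity) hv0
  have hbn : ‖b‖ = ‖w‖ := by
    rw [hb, norm_smul, Real.norm_eq_abs, abs_of_pos (by positivity)]
    field_simp
  have hwb : ⟪w, b⟫ = 0 := by
    rw [hb, real_inner_smul_right, hperp, mul_zero]
  have hbw : ⟪b, w⟫ = 0 := by rw [real_inner_comm]; exact hwb
  set c := f w with hc
  set d := f b with hd
  -- f(w+b) = f(w-b) = f(b-w) = max c d
  have h1 : f (w + b) = max c d := hmax w b hw0 hb0 hwb
  have h2 : f (w - b) = max c d := by
    have : f (w + -b) = max c (f (-b)) := by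
      refine hmax w (-b) hw0 (neg_ne_zero.mpr hb0) ?_
      rw [inner_neg_right, hwb, neg_zero]
    rw [hfneg b] at this
    rw [sub_eq_add_neg]; exact this
  have h3 : f (b - w) = max c d := by
    rw [(neg_sub w b).symm, hfneg, h2]
  -- nonvanishing of w±b
  have hwpb : w + b ≠ 0 := by
    intro h
    have hbw' : b = -w := eq_neg_of_add_eq_zero_right h
    rw [hbw', inner_neg_right, real_inner_self_eq_norm_mul_norm] at hwb
    nlinarith
  have hwmb : w - b ≠ 0 := by
    intro h
    have hbw' : b = w := by
      have := sub_eq_zero.mp h; exact this.symm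
    rw [hbw', real_inner_self_eq_norm_mul_norm] at hwb
    nlinarith
  have hbmw : b - w ≠ 0 := by
    intro h; exact hwmb (by rw [(neg_sub b w).symm, h, neg_zero])
  -- inner products of the rotated pair
  have hperp2 : ⟪w + b, w - b⟫ = 0 := by
    rw [inner_sub_right, inner_add_left, inner_add_left,
      real_inner_self_eq_norm_mul_norm, real_inner_self_eq_norm_mul_norm, hwb, hbw, hbn]
    ring
  have hperp3 : ⟪w + b, b - w⟫ = 0 := by
    rw [(neg_sub w b).symm, inner_neg_right, hperp2, neg_zero]
  -- the two relations
  have r1 : f ((w + b) + (w - b)) = max (f (w + b)) (f (w - b)) :=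
    hmax _ _ hwpb hwmb hperp2
  have r2 : f ((w + b) + (b - w)) = max (f (w + b)) (f (b - w)) :=
    hmax _ _ hwpb hbmw hperp3
  have e1 : (w + b) + (w - b) = (2:ℝ) • w := by module
  have e2 : (w + b) + (b - w) = (2:ℝ) • b := by module
  rw [e1, hhom] at r1
  rw [e2, hhom] at r2
  rw [h1, h2, max_self] at r1
  rw [h1, h3, max_self] at r2
  have habs : |(2:ℝ)| = 2 := by norm_num
  rw [habs] at r1 r2
  -- 2c = max c d and 2d = max c d
  rcases max_cases c d with ⟨hm, _⟩ | ⟨hm, _⟩ <;>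
    rw [hm] at r1 r2 <;> linarith
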